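/- Let n ≥ 1, let C = {x ∈ ℝⁿ : x_1 ≤ x_2 ≤ ⋯ ≤ x_n ≤ x_1 + 1}, and define T : ℝⁿ → ℝⁿ by T(x_1, x_2, …, x_n) = (x_2, …, x_n, x_1 + 1). Then: (1) T is a surjective isometry of ℝⁿ (with the Euclidean metric); (2) T(C) = C; (3) the cyclic group generated by T acts freely on ℝⁿ, i.e. T^k(x) = x for some x ∈ ℝⁿ implies k = 0; and (4) for every x ∈ C there exists k ∈ ℤ with T^k(x) ∈ Δ, where Δ = {x ∈ ℝⁿ : 0 ≤ x_1 ≤ ⋯ ≤ x_n ≤ 1} is the standard n-dimensional orthoscheme. -/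

import Mathlib

/-- The translation-rotation `T(x₁, …, xₙ) = (x₂, …, xₙ, x₁ + 1)` of Euclidean `n`-space. -/
noncomputable def Tmap (n : ℕ) :
    EuclideanSpace ℝ (Fin n) → EuclideanSpace ℝ (Fin n) := fun x => WithLp.toLp 2 fun i =>
  if h : (i : ℕ) + 1 < n then x ⟨(i : ℕ) + 1, h⟩ else x ⟨0, i.pos⟩ + 1

/-- The inverse translation-rotation `T⁻¹(x₁, …, xₙ) = (xₙ − 1, x₁, …, x_{n−1})`. -/
noncomputable def Tinv (n : ℕ) :
    EuclideanSpace ℝ (Fin n) → EuclideanSpace ℝ (Fin n) := fun x => WithLp.toLp 2 fun i =>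
  if (i : ℕ) = 0 then x ⟨n - 1, by have := i.pos; omega⟩ - 1
  else x ⟨(i : ℕ) - 1, by have := i.isLt; omega⟩

/-- The column `C = {x ∈ ℝⁿ : x₁ ≤ x₂ ≤ ⋯ ≤ xₙ ≤ x₁ + 1}` (equivalently: `x` is monotone
and `x i ≤ x j + 1` for all `i, j`). -/
def ColumnSet (n : ℕ) : Set (EuclideanSpace ℝ (Fin n)) :=
  {x | (∀ i j : Fin n, i ≤ j → x i ≤ x j) ∧ ∀ i j : Fin n, x i ≤ x j + 1}

/-- The standard `n`-dimensional orthoscheme `Δ = {x ∈ ℝⁿ : 0 ≤ x₁ ≤ ⋯ ≤ xₙ ≤ 1}`. -/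
def DeltaSet (n : ℕ) : Set (EuclideanSpace ℝ (Fin n)) :=
  {x | (∀ i j : Fin n, i ≤ j → x i ≤ x j) ∧ ∀ i : Fin n, 0 ≤ x i ∧ x i ≤ 1}

lemma tinv_tmap (n : ℕ) (x : EuclideanSpace ℝ (Fin n)) : Tinv n (Tmap n x) = x := by
  ext i
  have hlt := i.isLt
  simp only [Tinv, Tmap, PiLp.toLp_apply]
  split_ifs with h1 h2 h2
  · omega
  · rw [show (⟨0, i.pos⟩ : Fin n) = i from Fin.ext (show 0 = (i:ℕ) by omega)]; ring
  · exact congrArg x (Fin.ext (show (i:ℕ) - 1 + 1 = i by omega))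
  · omega

lemma tmap_tinv (n : ℕ) (x : EuclideanSpace ℝ (Fin n)) : Tmap n (Tinv n x) = x := by
  ext i
  have hlt := i.isLt
  simp only [Tinv, Tmap, PiLp.toLp_apply]
  split_ifs with h1 h2
  · simp at h2
  · exact congrArg x (Fin.ext (by simp))
  · rw [show (⟨n-1, by omega⟩ : Fin n) = i from Fin.ext (show n - 1 = (i:ℕ) by omega)]; ring

private def rot (n : ℕ) (hn : 1 ≤ n) : Equiv.Perm (Fin n) where
  toFun i := if h : (i : ℕ) + 1 < n then ⟨(i : ℕ) + 1, h⟩ else ⟨0, hn⟩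
  invFun i := if (i : ℕ) = 0 then ⟨n - 1, by omega⟩
    else ⟨(i : ℕ) - 1, by have := i.isLt; omega⟩
  left_inv := by
    intro i
    have hlt := i.isLt
    simp only []
    split_ifs with h1 h2 h2 <;> (try simp at h2) <;>
      (try (apply Fin.ext; simp)) <;> omega
  right_inv := by
    intro i
    have hlt := i.isLt
    simp only []
    split_ifs with h1 h2 h2 <;> (try simp at h2) <;>
      (try (apply Fin.ext; simp)) <;> omega

lemma tmap_isometry (n : ℕ) (hn : 1 ≤ n) : Isometry (Tmap n) := by
  apply Isometry.of_dist_eq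
  intro x y
  rw [EuclideanSpace.dist_eq, EuclideanSpace.dist_eq]
  congr 1
  rw [← Equiv.sum_comp (rot n hn) (fun i => dist (x i) (y i) ^ 2)]
  refine Finset.sum_congr rfl fun i _ => ?_
  simp only [Tmap, rot, Equiv.coe_fn_mk, PiLp.toLp_apply]
  by_cases h : (i : ℕ) + 1 < n
  · rw [dif_pos h, dif_pos h, dif_pos h]
  · rw [dif_neg h, dif_neg h, dif_neg h, dist_add_right]

lemma sum_tmap (n : ℕ) (hn : 1 ≤ n) (x : EuclideanSpace ℝ (Fin n)) :
    ∑ i, Tmap n x i = (∑ i, x i) + 1 := by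
  have key : ∀ i : Fin n, Tmap n x i
      = x (rot n hn i) + (if i = (⟨n - 1, by omega⟩ : Fin n) then 1 else 0) := by
    intro i
    have hlt := i.isLt
    simp only [Tmap, rot, Equiv.coe_fn_mk, PiLp.toLp_apply]
    by_cases h : (i : ℕ) + 1 < n
    · rw [dif_pos h, dif_pos h,
        if_neg (fun e => by have := congrArg Fin.val e; simp at this; omega)]
      ring
    · rw [dif_neg h, dif_neg h, if_pos (Fin.ext (show (i:ℕ) = n - 1 by omega))]
  rw [Finset.sum_congr rfl (fun i _ => key i), Finset.sum_add_distrib, Equiv.sum_comp]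
  congr 1
  rw [Finset.sum_ite_eq' Finset.univ (⟨n - 1, by omega⟩ : Fin n) (fun _ => (1:ℝ))]
  simp

lemma tmap_iter (n r : ℕ) (hr : r ≤ n) (x : EuclideanSpace ℝ (Fin n)) (i : Fin n) :
    (Tmap n)^[r] x i = if h : (i : ℕ) + r < n then x ⟨(i : ℕ) + r, h⟩
      else x ⟨(i : ℕ) + r - n, by have := i.isLt; omega⟩ + 1 := by
  induction r generalizing x with
  | zero =>
      have hi := i.isLt
      rw [dif_pos (by omega)]
      simp only [Function.iterate_zero, id_eq]
      exact congrArg x (Fin.ext (by simp))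
  | succ r ih =>
      have hi := i.isLt
      rw [Function.iterate_succ_apply, ih ((Nat.le_succ r).trans hr) (Tmap n x)]
      by_cases h1 : (i : ℕ) + r < n
      · rw [dif_pos h1]
        simp only [Tmap, PiLp.toLp_apply]
        by_cases h2 : (i : ℕ) + r + 1 < n
        · rw [dif_pos (show ((⟨(i:ℕ)+r, h1⟩ : Fin n) : ℕ) + 1 < n from h2),
            dif_pos (show (i:ℕ) + (r+1) < n by omega)]
          exact congrArg x (Fin.ext (by simp; omega))
        · rw [dif_neg (show ¬ (((⟨(i:ℕ)+r, h1⟩ : Fin n) : ℕ) + 1 < n) from h2),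
            dif_neg (show ¬ ((i:ℕ) + (r+1) < n) by omega)]
          exact congrArg (· + 1) (congrArg x (Fin.ext (by simp; omega)))
      · rw [dif_neg h1]
        simp only [Tmap, PiLp.toLp_apply]
        rw [dif_pos (show ((⟨(i:ℕ)+r-n, by omega⟩ : Fin n) : ℕ) + 1 < n by simp; omega),
          dif_neg (show ¬ ((i:ℕ) + (r+1) < n) by omega)]
        exact congrArg (· + 1) (congrArg x (Fin.ext (by simp; omega)))

lemma tmap_mem_col (n : ℕ) (x : EuclideanSpace ℝ (Fin n))
    (hx : x ∈ ColumnSet n) : Tmap n x ∈ ColumnSet n := by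
  obtain ⟨hm, hb⟩ := hx
  constructor
  · intro i j hij
    have hij' : (i : ℕ) ≤ (j : ℕ) := hij
    have hi := i.isLt; have hj := j.isLt
    simp only [Tmap, PiLp.toLp_apply]
    split_ifs with h1 h2 h2
    · exact hm _ _ (by simp only [Fin.mk_le_mk]; omega)
    · exact hb _ _
    · omega
    · exact add_le_add_left (hm ⟨0, i.pos⟩ ⟨0, j.pos⟩ (by simp only [Fin.mk_le_mk]; omega)) 1
  · intro i j
    have hi := i.isLt; have hj := j.isLt
    simp only [Tmap, PiLp.toLp_apply]
    split_ifs with h1 h2 h2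
    · exact hb _ _
    · linarith [hb (⟨(i:ℕ)+1, h1⟩ : Fin n) (⟨0, i.pos⟩ : Fin n)]
    · linarith [hm (⟨0, i.pos⟩ : Fin n) (⟨(j:ℕ)+1, h2⟩ : Fin n) (by simp only [Fin.mk_le_mk]; omega)]
    · linarith [hm (⟨0, i.pos⟩ : Fin n) (⟨0, j.pos⟩ : Fin n) (by simp only [Fin.mk_le_mk]; omega)]

lemma tinv_mem_col (n : ℕ) (x : EuclideanSpace ℝ (Fin n))
    (hx : x ∈ ColumnSet n) : Tinv n x ∈ ColumnSet n := by
  obtain ⟨hm, hb⟩ := hx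
  constructor
  · intro i j hij
    have hij' : (i : ℕ) ≤ (j : ℕ) := hij
    have hi := i.isLt; have hj := j.isLt
    simp only [Tinv, PiLp.toLp_apply]
    split_ifs with h1 h2 h2
    · exact le_rfl
    · linarith [hb (⟨n-1, by omega⟩ : Fin n) (⟨(j:ℕ)-1, by omega⟩ : Fin n)]
    · omega
    · exact hm _ _ (by simp only [Fin.mk_le_mk]; omega)
  · intro i j
    have hi := i.isLt; have hj := j.isLt
    simp only [Tinv, PiLp.toLp_apply]
    split_ifs with h1 h2 h2
    · linarith
    · linarith [hb (⟨n-1, by omega⟩ : Fin n) (⟨(j:ℕ)-1, by omega⟩ : Fin n)]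
    · linarith [hm (⟨(i:ℕ)-1, by omega⟩ : Fin n) (⟨n-1, by omega⟩ : Fin n)
        (by simp only [Fin.mk_le_mk]; omega)]
    · exact hb _ _

lemma sum_tmap_iter (n : ℕ) (hn : 1 ≤ n) (k : ℕ) (x : EuclideanSpace ℝ (Fin n)) :
    ∑ i, (Tmap n)^[k] x i = (∑ i, x i) + k := by
  induction k with
  | zero => simp
  | succ k ih =>
      rw [Function.iterate_succ_apply', sum_tmap n hn, ih]
      push_cast; ring

lemma free_tmap (n : ℕ) (hn : 1 ≤ n) :
    ∀ (k : ℕ) (x : EuclideanSpace ℝ (Fin n)), (Tmap n)^[k] x = x → k = 0 := by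
  intro k x h
  have hs := sum_tmap_iter n hn k x
  rw [h] at hs
  have : (k : ℝ) = 0 := by linarith
  exact_mod_cast this

lemma free_tinv (n : ℕ) (hn : 1 ≤ n) :
    ∀ (k : ℕ) (x : EuclideanSpace ℝ (Fin n)), (Tinv n)^[k] x = x → k = 0 := by
  intro k x h
  have L : Function.LeftInverse (Tmap n) (Tinv n) := fun y => tmap_tinv n y
  apply free_tmap n hn k x
  calc (Tmap n)^[k] x = (Tmap n)^[k] ((Tinv n)^[k] x) := by rw [h]
    _ = x := (L.iterate k) x

lemma tmap_shift (n : ℕ) (x : EuclideanSpace ℝ (Fin n)) (a : ℝ) :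
    Tmap n (WithLp.toLp 2 fun i => x i + a) = (WithLp.toLp 2 fun i => Tmap n x i + a) := by
  ext i
  simp only [Tmap, PiLp.toLp_apply]
  split_ifs <;> ring

lemma tmap_iter_shift (n k : ℕ) (x : EuclideanSpace ℝ (Fin n)) (a : ℝ) :
    (Tmap n)^[k] (WithLp.toLp 2 fun i => x i + a) = (WithLp.toLp 2 fun i => (Tmap n)^[k] x i + a) := by
  induction k generalizing x with
  | zero => rfl
  | succ k ih =>
      rw [Function.iterate_succ_apply, Function.iterate_succ_apply, tmap_shift, ih]

lemma tmap_iter_n_mul (n : ℕ) (a : ℕ) (x : EuclideanSpace ℝ (Fin n)) :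
    (Tmap n)^[n * a] x = WithLp.toLp 2 fun i => x i + a := by
  induction a generalizing x with
  | zero => ext i; simp
  | succ a ih =>
      have hTn : (Tmap n)^[n] x = WithLp.toLp 2 fun i => x i + 1 := by
        ext i
        rw [tmap_iter n n le_rfl, dif_neg (by have := i.isLt; omega)]
        exact congrArg (· + 1) (congrArg x (Fin.ext (by simp)))
      rw [show n * (a + 1) = n * a + n by ring, Function.iterate_add_apply, hTn, ih]
      ext i
      simp only [PiLp.toLp_apply]
      push_cast; ring

lemma part4 (n : ℕ) (hn : 1 ≤ n) :
    ∀ x ∈ ColumnSet n, ∃ k : ℕ,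
      (Tmap n)^[k] x ∈ DeltaSet n ∨ (Tinv n)^[k] x ∈ DeltaSet n := by
  intro x hx
  obtain ⟨hm, hb⟩ := hx
  set i0 : Fin n := ⟨0, hn⟩ with hi0
  set c : ℤ := ⌊x i0⌋ + 1 with hc
  have hx0c : x i0 < (c : ℝ) := by
    rw [hc]; push_cast; linarith [Int.lt_floor_add_one (x i0)]
  have hcx0 : (c : ℝ) ≤ x i0 + 1 := by
    rw [hc]; push_cast; linarith [Int.floor_le (x i0)]
  obtain ⟨r, hr1, hrn, hge, hlt⟩ :
      ∃ r : ℕ, 1 ≤ r ∧ r ≤ n ∧ (∀ j : Fin n, r ≤ (j : ℕ) → (c : ℝ) ≤ x j) ∧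
        (∀ j : Fin n, (j : ℕ) < r → x j < (c : ℝ)) := by
    classical
    by_cases hex : ∃ k : ℕ, ∃ hk : k < n, (c : ℝ) ≤ x ⟨k, hk⟩
    · refine ⟨Nat.find hex, ?_, ?_, ?_, ?_⟩
      · refine Nat.pos_of_ne_zero fun h0 => ?_
        obtain ⟨hk, hkx⟩ := (Nat.find_eq_zero hex).1 h0
        exact absurd (hkx : (c : ℝ) ≤ x i0) (not_le.2 hx0c)
      · obtain ⟨hk, _⟩ := Nat.find_spec hex; omega
      · intro j hj
        obtain ⟨hk, hkx⟩ := Nat.find_spec hex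
        exact le_trans hkx (hm _ _ (by simp only [Fin.mk_le_mk, Fin.le_def]; omega))
      · intro j hj
        have := Nat.find_min hex (m := (j : ℕ)) hj
        push_neg at this
        have := this j.isLt
        rwa [Fin.eta] at this
    · push_neg at hex
      exact ⟨n, hn, le_rfl, fun j hj => absurd j.isLt (by omega),
        fun j _ => hex j j.isLt⟩
  have hΔ : (WithLp.toLp 2 fun i => (Tmap n)^[r] x i - (c : ℝ)) ∈ DeltaSet n := by
    refine ⟨?_, ?_⟩
    · intro i j hij
      have hij' : (i : ℕ) ≤ (j : ℕ) := hij
      have hi := i.isLt; have hj := j.isLt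
      simp only [PiLp.toLp_apply]
      rw [tmap_iter n r hrn, tmap_iter n r hrn]
      split_ifs with h1 h2 h2
      · have := hm ⟨(i:ℕ)+r, h1⟩ ⟨(j:ℕ)+r, h2⟩ (by simp only [Fin.mk_le_mk]; omega)
        linarith
      · have := hb ⟨(i:ℕ)+r, h1⟩ ⟨(j:ℕ)+r-n, by omega⟩
        linarith
      · omega
      · have := hm ⟨(i:ℕ)+r-n, by omega⟩ ⟨(j:ℕ)+r-n, by omega⟩
          (by simp only [Fin.mk_le_mk]; omega)
        linarith
    · intro i
      have hi := i.isLt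
      simp only [PiLp.toLp_apply]
      rw [tmap_iter n r hrn]
      split_ifs with h1
      · constructor
        · have := hge ⟨(i:ℕ)+r, h1⟩ (Nat.le_add_left r (i:ℕ))
          linarith
        · have := hb ⟨(i:ℕ)+r, h1⟩ i0
          linarith
      · constructor
        · have := hm i0 ⟨(i:ℕ)+r-n, by omega⟩ (Fin.mk_le_mk.mpr (by omega))
          linarith
        · have := hlt ⟨(i:ℕ)+r-n, by omega⟩ (show (i:ℕ)+r-n < r by omega)
          linarith
  rcases le_or_gt c 0 with hcs | hcs
  · -- c ≤ 0 : use Tmap side with k = n * (-c).toNat + r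
    set a : ℕ := (-c).toNat with ha
    have haR : ((a : ℕ) : ℝ) = -(c : ℝ) := by
      rw [ha]
      rw [show ((((-c).toNat : ℕ)) : ℝ) = ((((-c).toNat : ℕ) : ℤ) : ℝ) by push_cast; ring,
        Int.toNat_of_nonneg (by omega)]
      push_cast; ring
    refine ⟨n * a + r, Or.inl ?_⟩
    rw [Function.iterate_add_apply, tmap_iter_n_mul n a ((Tmap n)^[r] x)]
    have e : (WithLp.toLp 2 fun i => (Tmap n)^[r] x i + (a : ℝ))
        = (WithLp.toLp 2 fun i => (Tmap n)^[r] x i - (c : ℝ)) := by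
      ext i; simp only [PiLp.toLp_apply]; rw [haR]; ring
    rw [e]
    exact hΔ
  · -- c ≥ 1 : use Tinv side with k = n * c.toNat - r
    set a : ℕ := c.toNat with ha
    have ha1 : 1 ≤ a := by omega
    have haR : ((a : ℕ) : ℝ) = (c : ℝ) := by
      rw [ha, show (((c.toNat : ℕ)) : ℝ) = (((c.toNat : ℕ) : ℤ) : ℝ) by push_cast; ring,
        Int.toNat_of_nonneg (by omega)]
    have hkr : n * a - r + r = n * a := by
      have : n ≤ n * a := Nat.le_mul_of_pos_right n (by omega)
      omega
    have hs : (Tmap n)^[n * a - r] (WithLp.toLp 2 fun i => (Tmap n)^[r] x i - (c : ℝ)) = x := by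
      have e1 : (WithLp.toLp 2 fun i => (Tmap n)^[r] x i - (c : ℝ))
          = (WithLp.toLp 2 fun i => (Tmap n)^[r] x i + (-(c : ℝ))) := by ext i; simp only [PiLp.toLp_apply]; ring
      rw [e1, tmap_iter_shift]
      ext i
      simp only [PiLp.toLp_apply]
      rw [← Function.iterate_add_apply, hkr, tmap_iter_n_mul n a x]
      simp only [PiLp.toLp_apply]
      rw [haR]; ring
    have L : Function.LeftInverse (Tinv n) (Tmap n) := fun y => tinv_tmap n y
    have key := (L.iterate (n * a - r)) (WithLp.toLp 2 fun i => (Tmap n)^[r] x i - (c : ℝ))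
    rw [hs] at key
    exact ⟨n * a - r, Or.inr (key ▸ hΔ)⟩


/-- (1) `T` is a surjective isometry of Euclidean `n`-space; (2) `T(C) = C`;
(3) the cyclic group generated by `T` acts freely; and (4) every point of the column `C`
can be moved into the orthoscheme `Δ` by a power of `T`. -/
theorem stmt16 (n : ℕ) (hn : 1 ≤ n) :
    -- (1) `T` is a surjective isometry (hence a bijection, with inverse `Tinv`)
    (Isometry (Tmap n) ∧ Function.Surjective (Tmap n) ∧
      (∀ x, Tinv n (Tmap n x) = x ∧ Tmap n (Tinv n x) = x)) ∧
    -- (2) `T(C) = C`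
    Tmap n '' ColumnSet n = ColumnSet n ∧
    -- (3) the cyclic group `⟨T⟩` acts freely: `T^k(x) = x` implies `k = 0`
    ((∀ (k : ℕ) (x), (Tmap n)^[k] x = x → k = 0) ∧
      (∀ (k : ℕ) (x), (Tinv n)^[k] x = x → k = 0)) ∧
    -- (4) every `x ∈ C` satisfies `T^k(x) ∈ Δ` for some `k ∈ ℤ`
    (∀ x ∈ ColumnSet n, ∃ k : ℕ,
      (Tmap n)^[k] x ∈ DeltaSet n ∨ (Tinv n)^[k] x ∈ DeltaSet n) := by
  refine ⟨⟨tmap_isometry n hn, fun y => ⟨Tinv n y, tmap_tinv n y⟩,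
      fun x => ⟨tinv_tmap n x, tmap_tinv n x⟩⟩, ?_,
    ⟨free_tmap n hn, free_tinv n hn⟩, part4 n hn⟩
  apply Set.eq_of_subset_of_subset
  · rintro y ⟨x, hx, rfl⟩
    exact tmap_mem_col n x hx
  · intro y hy
    exact ⟨Tinv n y, tinv_mem_col n y hy, tmap_tinv n y⟩
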